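/- Let d, r ∈ ℕ and let X ⊆ ℝ^d be a finite set with rank(X) ≥ r. Then there exists a set T ⊆ X with |T| ≤ r/2 + 1 such that |X + T| ≥ r|X|/6. -/

import Mathlib

open Classical Pointwise

/-- The rank of a finite set `X ⊆ ℝ^d`: the minimum dimension of an affine
subspace containing `X`. -/
noncomputable def affRank {d : ℕ} (X : Finset (Fin d → ℝ)) : ℕ :=
  Module.finrank ℝ (affineSpan ℝ (X : Set (Fin d → ℝ))).direction

section Aux

variable {d : ℕ}

/-- Over `ℝ`, there is a functional nonvanishing on finitely many nonzero vectors. -/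
lemma exists_dual_ne_zero {E : Type*} [AddCommGroup E] [Module ℝ E]
    (S : Finset E) (hS : ∀ v ∈ S, v ≠ 0) :
    ∃ ψ : E →ₗ[ℝ] ℝ, ∀ v ∈ S, ψ v ≠ 0 := by
  classical
  induction S using Finset.induction_on with
  | empty => exact ⟨0, by simp⟩
  | @insert a S ha ih =>
    obtain ⟨ψ, hψ⟩ := ih fun v hv => hS v (Finset.mem_insert_of_mem hv)
    have hane : a ≠ 0 := hS a (Finset.mem_insert_self a S)
    have hex : ¬ ∀ χ : Module.Dual ℝ E, χ a = 0 := by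
      rw [Module.forall_dual_apply_eq_zero_iff]; exact hane
    push_neg at hex
    obtain ⟨χ, hχ⟩ := hex
    obtain ⟨s, hs⟩ :=
      Infinite.exists_notMem_finset ((insert a S).image fun u => -(ψ u) / (χ u))
    refine ⟨ψ + s • χ, ?_⟩
    intro v hv
    simp only [LinearMap.add_apply, LinearMap.smul_apply, smul_eq_mul]
    rcases eq_or_ne (χ v) 0 with h0 | h0
    · rw [h0, mul_zero, add_zero]
      rcases Finset.mem_insert.mp hv with rfl | hvS
      · exact absurd h0 hχ
      · exact hψ v hvS
    · intro hc
      apply hs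
      refine Finset.mem_image.mpr ⟨v, hv, ?_⟩
      field_simp
      linarith [hc]

/-- A functional vanishing on a subspace and nonvanishing on finitely many
vectors outside it. -/
lemma exists_functional (U : Submodule ℝ (Fin d → ℝ)) (S : Finset (Fin d → ℝ))
    (hS : ∀ v ∈ S, v ∉ U) :
    ∃ φ : (Fin d → ℝ) →ₗ[ℝ] ℝ, (∀ u ∈ U, φ u = 0) ∧ ∀ v ∈ S, φ v ≠ 0 := by
  classical
  have h1 : ∀ w ∈ S.image U.mkQ, w ≠ 0 := by
    intro w hw
    obtain ⟨v, hv, rfl⟩ := Finset.mem_image.mp hw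
    simpa [Submodule.mkQ_apply, Submodule.Quotient.mk_eq_zero] using hS v hv
  obtain ⟨ψ, hψ⟩ := exists_dual_ne_zero (S.image U.mkQ) h1
  refine ⟨ψ.comp U.mkQ, ?_, ?_⟩
  · intro u hu
    have : U.mkQ u = 0 := by
      simpa [Submodule.mkQ_apply] using (Submodule.Quotient.mk_eq_zero U).mpr hu
    simp [LinearMap.comp_apply, this]
  · intro v hv
    exact hψ _ (Finset.mem_image_of_mem _ hv)

/-- Greedy gain: translating by a maximizer of `φ` adds at least
`|{y ∈ X : φ y > c}|` new elements, if `φ ≡ c` on `T`. -/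
lemma gain_lemma {X T : Finset (Fin d → ℝ)} (hX : X.Nonempty)
    (φ : (Fin d → ℝ) →ₗ[ℝ] ℝ) (c : ℝ) (hTc : ∀ t ∈ T, φ t = c) :
    ∃ t ∈ X, (X + T).card + (X.filter fun y => c < φ y).card ≤
      (X + insert t T).card := by
  classical
  obtain ⟨b, hbX, hb⟩ := X.exists_max_image φ hX
  refine ⟨b, hbX, ?_⟩
  set S := X.filter (fun y => c < φ y) with hSdef
  have hsub : (X + T) ∪ S.image (fun y => y + b) ⊆ X + insert b T := by
    intro z hz
    rcases Finset.mem_union.mp hz with hz | hz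
    · exact Finset.add_subset_add_left (T.subset_insert b) hz
    · obtain ⟨y, hyS, rfl⟩ := Finset.mem_image.mp hz
      exact Finset.add_mem_add (Finset.mem_filter.mp hyS).1 (Finset.mem_insert_self b T)
  have hdisj : Disjoint (X + T) (S.image fun y => y + b) := by
    rw [Finset.disjoint_right]
    intro z hz hz'
    obtain ⟨y, hyS, rfl⟩ := Finset.mem_image.mp hz
    obtain ⟨x, hx, t, ht, hxt⟩ := Finset.mem_add.mp hz'
    have h1 : φ x + c = φ y + φ b := by
      have h := congrArg φ hxt
      simpa [map_add, hTc t ht] using h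
    have h2 : c < φ y := (Finset.mem_filter.mp hyS).2
    have h3 : φ x ≤ φ b := hb x hx
    linarith
  have hcard := Finset.card_le_card hsub
  rwa [Finset.card_union_of_disjoint hdisj,
    Finset.card_image_of_injective _ (add_left_injective b)] at hcard

/-- If the greedy process is stuck, more than a third of `X` lies in the
affine span of `T`. -/
lemma stuck_heavy {X T : Finset (Fin d → ℝ)} (hT : T ⊆ X) (hTne : T.Nonempty)
    (hstuck : ∀ t ∈ X, 3 * (X + insert t T).card < 3 * (X + T).card + X.card) :
    X.card < 3 * (X.filter fun x => x ∈ affineSpan ℝ (T : Set (Fin d → ℝ))).card := by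
  classical
  by_contra hcon
  push_neg at hcon
  obtain ⟨t₀, ht₀⟩ := hTne
  have hX : X.Nonempty := ⟨t₀, hT ht₀⟩
  set A := affineSpan ℝ (T : Set (Fin d → ℝ)) with hA
  have ht₀A : t₀ ∈ A := mem_affineSpan ℝ (Finset.mem_coe.mpr ht₀)
  have hSnotin : ∀ v ∈ (X.filter fun x => x ∉ A).image (fun x => x - t₀),
      v ∉ A.direction := by
    intro w hw
    obtain ⟨x, hx, rfl⟩ := Finset.mem_image.mp hw
    have hxA : x ∉ A := (Finset.mem_filter.mp hx).2
    intro hmem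
    apply hxA
    have hmem' : x -ᵥ t₀ ∈ A.direction := by simpa [vsub_eq_sub] using hmem
    exact (AffineSubspace.vsub_right_mem_direction_iff_mem ht₀A x).mp hmem'
  obtain ⟨φ, hφU, hφS⟩ := exists_functional A.direction _ hSnotin
  set c := φ t₀ with hc
  have hTc : ∀ t ∈ T, φ t = c := by
    intro t ht
    have hdir : t - t₀ ∈ A.direction := by
      have := AffineSubspace.vsub_mem_direction
        (mem_affineSpan ℝ (Finset.mem_coe.mpr ht)) ht₀A
      simpa [vsub_eq_sub] using this
    have h0 := hφU _ hdir
    have : φ t - φ t₀ = 0 := by rw [← map_sub]; exact h0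
    linarith
  have keyP : 3 * (X.filter fun y => c < φ y).card < X.card := by
    obtain ⟨t, htX, hgain⟩ := gain_lemma hX φ c hTc
    have := hstuck t htX
    omega
  have keyN : 3 * (X.filter fun y => φ y < c).card < X.card := by
    have hTc' : ∀ t ∈ T, (-φ) t = -c := by intro t ht; simp [hTc t ht]
    obtain ⟨t, htX, hgain⟩ := gain_lemma hX (-φ) (-c) hTc'
    have hfe : (X.filter fun y => -c < (-φ) y) = X.filter fun y => φ y < c := by
      apply Finset.filter_congr
      intro y _
      simp
    rw [hfe] at hgain
    have := hstuck t htX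
    omega
  have hcover : X ⊆ (X.filter fun x => x ∈ A) ∪
      ((X.filter fun y => c < φ y) ∪ (X.filter fun y => φ y < c)) := by
    intro x hx
    by_cases hxA : x ∈ A
    · exact Finset.mem_union_left _ (Finset.mem_filter.mpr ⟨hx, hxA⟩)
    · have hne : φ (x - t₀) ≠ 0 := by
        apply hφS
        exact Finset.mem_image_of_mem _ (Finset.mem_filter.mpr ⟨hx, hxA⟩)
      have hne' : φ x ≠ c := by
        intro h
        apply hne
        rw [map_sub, h, hc, sub_self]
      rcases lt_or_gt_of_ne hne' with h | h
      · exact Finset.mem_union_right _ (Finset.mem_union_right _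
          (Finset.mem_filter.mpr ⟨hx, h⟩))
      · exact Finset.mem_union_right _ (Finset.mem_union_left _
          (Finset.mem_filter.mpr ⟨hx, h⟩))
  have hcardle : X.card ≤ (X.filter fun x => x ∈ A).card +
      ((X.filter fun y => c < φ y).card + (X.filter fun y => φ y < c).card) :=
    le_trans (Finset.card_le_card hcover)
      (le_trans (Finset.card_union_le _ _)
        (by exact add_le_add le_rfl (Finset.card_union_le _ _)))
  omega

/-- Heavy flat: if a big chunk of `X` lies in a low-dimensional affine subspace,
we can find many translates of it that are pairwise disjoint. -/
lemma heavy_flat {m : ℕ} {X X₀ : Finset (Fin d → ℝ)} (hX₀X : X₀ ⊆ X)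
    (hX₀ne : X₀.Nonempty) (A : AffineSubspace ℝ (Fin d → ℝ))
    (hX₀A : ∀ x ∈ X₀, x ∈ A)
    (hdim : Module.finrank ℝ A.direction + m ≤ affRank X + 1) :
    ∃ R ⊆ X, R.card = m ∧ m * X₀.card ≤ (X + R).card := by
  classical
  set U := A.direction with hU
  set I := X.image (fun x => U.mkQ x) with hI
  have hrep : ∀ i ∈ I, ∃ x, x ∈ X ∧ U.mkQ x = i := by
    intro i hi
    obtain ⟨x, hx, hxi⟩ := Finset.mem_image.mp hi
    exact ⟨x, hx, hxi⟩
  choose f hf1 hf2 using hrep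
  set R : Finset (Fin d → ℝ) := I.attach.image (fun i => f i.1 i.2) with hR
  have hRX : R ⊆ X := by
    intro x hx
    obtain ⟨i, _, rfl⟩ := Finset.mem_image.mp hx
    exact hf1 i.1 i.2
  have hRcard : R.card = I.card := by
    rw [hR, Finset.card_image_of_injOn, Finset.card_attach]
    intro i _ j _ hij
    have hij' : f i.1 i.2 = f j.1 j.2 := by simpa using hij
    have : i.1 = j.1 := by rw [← hf2 i.1 i.2, ← hf2 j.1 j.2, hij']
    exact Subtype.ext this
  have hXne : X.Nonempty := hX₀ne.mono hX₀X
  have hIne : I.Nonempty := hXne.image _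
  have hRne : R.Nonempty := by
    rw [← Finset.card_pos, hRcard, Finset.card_pos]; exact hIne
  -- rank bound : vectorSpan X ≤ U ⊔ vectorSpan R
  have hspan : vectorSpan ℝ (X : Set (Fin d → ℝ)) ≤
      U ⊔ vectorSpan ℝ (R : Set (Fin d → ℝ)) := by
    rw [vectorSpan_def]
    apply Submodule.span_le.mpr
    rintro v hv
    obtain ⟨x, hx, y, hy, rfl⟩ := Set.mem_vsub.mp hv
    simp only [Finset.mem_coe] at hx hy
    have hxI : U.mkQ x ∈ I := Finset.mem_image_of_mem _ hx
    have hyI : U.mkQ y ∈ I := Finset.mem_image_of_mem _ hy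
    set rx := f (U.mkQ x) hxI with hrx
    set ry := f (U.mkQ y) hyI with hry
    have hrxR : rx ∈ R := Finset.mem_image.mpr ⟨⟨U.mkQ x, hxI⟩, Finset.mem_attach _ _, rfl⟩
    have hryR : ry ∈ R := Finset.mem_image.mpr ⟨⟨U.mkQ y, hyI⟩, Finset.mem_attach _ _, rfl⟩
    have hxU : x - rx ∈ U := by
      rw [← Submodule.Quotient.mk_eq_zero U]
      have : U.mkQ (x - rx) = 0 := by
        rw [map_sub, hf2 (U.mkQ x) hxI]; simp
      simpa [Submodule.mkQ_apply] using this
    have hyU : y - ry ∈ U := by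
      rw [← Submodule.Quotient.mk_eq_zero U]
      have : U.mkQ (y - ry) = 0 := by
        rw [map_sub, hf2 (U.mkQ y) hyI]; simp
      simpa [Submodule.mkQ_apply] using this
    have hrr : rx - ry ∈ vectorSpan ℝ (R : Set (Fin d → ℝ)) := by
      have := vsub_mem_vectorSpan ℝ (Finset.mem_coe.mpr hrxR) (Finset.mem_coe.mpr hryR)
      simpa [vsub_eq_sub] using this
    have hdecomp : x -ᵥ y = ((x - rx) - (y - ry)) + (rx - ry) := by
      simp [vsub_eq_sub]; ring
    rw [hdecomp]
    exact Submodule.add_mem _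
      (Submodule.mem_sup_left (Submodule.sub_mem _ hxU hyU))
      (Submodule.mem_sup_right hrr)
  have hrankR : Module.finrank ℝ (vectorSpan ℝ (R : Set (Fin d → ℝ))) + 1 ≤ R.card := by
    obtain ⟨p, hp⟩ : ∃ p, R.card = p + 1 :=
      ⟨R.card - 1, (Nat.succ_pred_eq_of_pos (Finset.card_pos.mpr hRne)).symm⟩
    have := finrank_vectorSpan_image_finset_le ℝ (id : (Fin d → ℝ) → (Fin d → ℝ)) R hp
    rw [Finset.image_id] at this
    omega
  have haff : affRank X ≤ Module.finrank ℝ U +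
      Module.finrank ℝ (vectorSpan ℝ (R : Set (Fin d → ℝ))) := by
    have h1 : affRank X = Module.finrank ℝ (vectorSpan ℝ (X : Set (Fin d → ℝ))) := by
      rw [affRank, direction_affineSpan]
    rw [h1]
    exact le_trans (Submodule.finrank_mono hspan)
      (Submodule.finrank_add_le_finrank_add_finrank _ _)
  have hmR : m ≤ R.card := by omega
  obtain ⟨R', hR'R, hR'card⟩ := Finset.exists_subset_card_eq hmR
  refine ⟨R', hR'R.trans hRX, hR'card, ?_⟩
  -- disjoint translates
  have hqinj : ∀ x ∈ R, ∀ y ∈ R, U.mkQ x = U.mkQ y → x = y := by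
    intro x hx y hy hxy
    obtain ⟨i, _, rfl⟩ := Finset.mem_image.mp hx
    obtain ⟨j, _, rfl⟩ := Finset.mem_image.mp hy
    have : i.1 = j.1 := by rw [← hf2 i.1 i.2, ← hf2 j.1 j.2, hxy]
    rw [Subtype.ext this]
  set B := R'.biUnion (fun t => X₀.image (fun y => y + t)) with hB
  have hBsub : B ⊆ X + R' := by
    intro z hz
    obtain ⟨t, ht, hz⟩ := Finset.mem_biUnion.mp hz
    obtain ⟨y, hy, rfl⟩ := Finset.mem_image.mp hz
    exact Finset.add_mem_add (hX₀X hy) ht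
  have hBcard : B.card = m * X₀.card := by
    rw [hB, Finset.card_biUnion]
    · rw [Finset.sum_congr rfl
        (fun t _ => Finset.card_image_of_injective X₀ (add_left_injective t))]
      rw [Finset.sum_const, hR'card, smul_eq_mul]
    · intro t ht t' ht' htt'
      rw [Function.onFun, Finset.disjoint_left]
      intro z hz hz'
      obtain ⟨y, hy, rfl⟩ := Finset.mem_image.mp hz
      obtain ⟨y', hy', he⟩ := Finset.mem_image.mp hz'
      apply htt'
      have hyA : y ∈ A := hX₀A y hy
      have hy'A : y' ∈ A := hX₀A y' hy'
      have hdiff : y - y' ∈ U := by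
        have := AffineSubspace.vsub_mem_direction hyA hy'A
        simpa [vsub_eq_sub] using this
      have htt : t - t' = y' - y := by
        have h : y' + t' = y + t := he
        apply sub_eq_sub_iff_add_eq_add.mpr
        rw [add_comm t y]
        exact h.symm
      have hq : U.mkQ t = U.mkQ t' := by
        have h0 : U.mkQ (t - t') = 0 := by
          rw [htt]
          rw [show y' - y = -(y - y') by ring]
          rw [map_neg]
          have : U.mkQ (y - y') = 0 := by
            simpa [Submodule.mkQ_apply] using (Submodule.Quotient.mk_eq_zero U).mpr hdiff
          rw [this, neg_zero]
        have := sub_eq_zero.mp (by rwa [map_sub] at h0)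
        exact this
      exact hqinj t (hR'R ht) t' (hR'R ht') hq
  calc m * X₀.card = B.card := hBcard.symm
    _ ≤ (X + R').card := Finset.card_le_card hBsub

end Aux

/-- Weak Freĭman's lemma via few translates: if `rank(X) ≥ r` then there is
`T ⊆ X` with `|T| ≤ r/2 + 1` and `|X + T| ≥ r|X|/6`. -/
theorem weak_freiman_few_translates (d r : ℕ) (X : Finset (Fin d → ℝ))
    (hrank : r ≤ affRank X) :
    ∃ T ⊆ X, (T.card : ℝ) ≤ (r : ℝ) / 2 + 1 ∧
      (r : ℝ) * X.card / 6 ≤ ((X + T).card : ℝ) := by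
  classical
  rcases Nat.eq_zero_or_pos r with rfl | hr
  · refine ⟨∅, Finset.empty_subset X, by norm_num, ?_⟩
    norm_num
  have hXne : X.Nonempty := by
    rw [Finset.nonempty_iff_ne_empty]
    rintro rfl
    have h0 : affRank (∅ : Finset (Fin d → ℝ)) = 0 := by simp [affRank]
    omega
  set n := X.card with hn
  have hnpos : 1 ≤ n := Finset.card_pos.mpr hXne
  set m := r / 2 + 1 with hm
  have main : ∀ j : ℕ, j ≤ r / 2 →
      ((∃ T ⊆ X, (T.card : ℝ) ≤ (r : ℝ) / 2 + 1 ∧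
        (r : ℝ) * (n : ℝ) / 6 ≤ ((X + T).card : ℝ)) ∨
       ∃ T, T ⊆ X ∧ T.Nonempty ∧ T.card = j + 1 ∧
        3 * n + j * n ≤ 3 * (X + T).card) := by
    intro j
    induction j with
    | zero =>
      intro _
      right
      obtain ⟨x₀, hx₀⟩ := hXne
      refine ⟨{x₀}, Finset.singleton_subset_iff.mpr hx₀, Finset.singleton_nonempty _,
        Finset.card_singleton _, ?_⟩
      have hcs : (X + {x₀}).card = n := Finset.card_add_singleton X x₀
      have h0 : 3 * n + 0 * n = 3 * n := by ring
      omega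
    | succ j ih =>
      intro hj1
      rcases ih (by omega) with goal | ⟨T, hTX, hTne, hTcard, hTbound⟩
      · exact Or.inl goal
      by_cases hstep : ∃ t ∈ X, 3 * (X + T).card + n ≤ 3 * (X + insert t T).card
      · right
        obtain ⟨t, htX, hgain⟩ := hstep
        have htT : t ∉ T := by
          intro h
          rw [Finset.insert_eq_self.mpr h] at hgain
          omega
        refine ⟨insert t T, Finset.insert_subset htX hTX,
          ⟨t, Finset.mem_insert_self _ _⟩, ?_, ?_⟩
        · rw [Finset.card_insert_of_notMem htT, hTcard]
        · have hmul : (j + 1) * n = j * n + n := by ring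
          omega
      · left
        push_neg at hstep
        have hheavy := stuck_heavy hTX hTne (by
          intro t ht
          have := hstep t ht
          omega)
        set X₀ := X.filter (fun x => x ∈ affineSpan ℝ (T : Set (Fin d → ℝ))) with hX₀
        have hX₀X : X₀ ⊆ X := Finset.filter_subset _ _
        have hX₀ne : X₀.Nonempty := by
          rw [← Finset.card_pos]
          omega
        have hdirle : Module.finrank ℝ (affineSpan ℝ (T : Set (Fin d → ℝ))).direction ≤ j := by
          rw [direction_affineSpan]
          have := finrank_vectorSpan_image_finset_le ℝ
            (id : (Fin d → ℝ) → (Fin d → ℝ)) T hTcard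
          rwa [Finset.image_id] at this
        have hdim : Module.finrank ℝ (affineSpan ℝ (T : Set (Fin d → ℝ))).direction + m
            ≤ affRank X + 1 := by omega
        obtain ⟨R, hRX, hRcard, hRbound⟩ := heavy_flat hX₀X hX₀ne _
          (fun x hx => (Finset.mem_filter.mp hx).2) hdim
        refine ⟨R, hRX, ?_, ?_⟩
        · rw [hRcard, hm]
          push_cast
          have := Nat.cast_div_le (α := ℝ) (m := r) (n := 2)
          push_cast at this
          linarith
        · have h1 : r + 1 ≤ 2 * m := by omega
          have hRb : (m : ℝ) * (X₀.card : ℝ) ≤ ((X + R).card : ℝ) := by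
            exact_mod_cast hRbound
          have hhv : (n : ℝ) < 3 * (X₀.card : ℝ) := by exact_mod_cast hheavy
          have h1' : (r : ℝ) + 1 ≤ 2 * (m : ℝ) := by exact_mod_cast h1
          have hm0 : (0 : ℝ) ≤ (m : ℝ) := Nat.cast_nonneg _
          have hn0 : (0 : ℝ) ≤ (n : ℝ) := Nat.cast_nonneg _
          nlinarith [mul_le_mul_of_nonneg_left hhv.le hm0,
            mul_le_mul_of_nonneg_right h1' hn0]
  rcases main (r / 2) le_rfl with goal | ⟨T, hTX, _, hTcard, hTbound⟩
  · exact goal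
  refine ⟨T, hTX, ?_, ?_⟩
  · rw [hTcard]
    push_cast
    have := Nat.cast_div_le (α := ℝ) (m := r) (n := 2)
    push_cast at this
    linarith
  · have h1 : r ≤ 2 * (r / 2) + 1 := by omega
    have hTb : 3 * (n : ℝ) + ((r / 2 : ℕ) : ℝ) * n ≤ 3 * ((X + T).card : ℝ) := by
      exact_mod_cast hTbound
    have h1' : (r : ℝ) ≤ 2 * ((r / 2 : ℕ) : ℝ) + 1 := by exact_mod_cast h1
    have hn0 : (0 : ℝ) ≤ (n : ℝ) := Nat.cast_nonneg _
    nlinarith [mul_le_mul_of_nonneg_right h1' hn0]
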